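/- Let L ≥ 1 be a natural number and q, q' ∈ [L]³. Then the subgraph of the grid graph induced on the set Λ(q) ∩ Λ(q') is nonempty and connected. Moreover, for every k ∈ Fin 3, letting i, j denote the two indices different from k, the set Λ(q) ∩ Λ(q') contains every point p ∈ [L]³ with p k = q k and (p i = q' i or p j = q' j). -/

import Mathlib

/-- Two points of the grid `[L]^D` are adjacent in the grid graph iff they agree
in all but exactly one coordinate, where they differ by exactly 1. -/
def gridAdj {L D : ℕ} (u v : Fin D → Fin L) : Prop :=
  ∃ i : Fin D, (∀ j : Fin D, j ≠ i → u j = v j) ∧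
    ((u i : ℕ) + 1 = (v i : ℕ) ∨ (v i : ℕ) + 1 = (u i : ℕ))

/-- The grid graph on `[L]^D`. -/
def gridGraph (L D : ℕ) : SimpleGraph (Fin D → Fin L) where
  Adj := gridAdj
  symm := by
    constructor
    rintro u v ⟨i, h1, h2⟩
    exact ⟨i, fun j hj => (h1 j hj).symm, h2.symm⟩
  loopless := by
    constructor
    rintro u ⟨i, h1, h2⟩
    rcases h2 with h | h <;> omega

/-- The star plane `Λ(q)`: points of the grid agreeing with `q` in all but at
most two coordinates. -/
def starPlane {L D : ℕ} (q : Fin D → Fin L) : Set (Fin D → Fin L) :=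
  { p | Set.ncard { k : Fin D | p k ≠ q k } ≤ 2 }

/-- **Intersection of two star planes is connected.**
For `q, q' ∈ [L]³` the subgraph of the grid graph induced on `Λ(q) ∩ Λ(q')` is
nonempty and connected; moreover, for every `k`, the intersection contains every
point `p` with `p k = q k` that agrees with `q'` at one of the other two
coordinates. -/
lemma mem_sp {L : ℕ} {q p : Fin 3 → Fin L} : p ∈ starPlane q ↔ ∃ i, p i = q i := by
  unfold starPlane
  constructor
  · intro h
    by_contra hc
    push_neg at hc
    have : { k : Fin 3 | p k ≠ q k } = Set.univ := by
      ext k; simpa using hc k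
    rw [Set.mem_setOf_eq, this, Set.ncard_univ] at h
    simp [Nat.card_eq_fintype_card] at h
  · rintro ⟨i, hi⟩
    have hsub : { k : Fin 3 | p k ≠ q k } ⊂ Set.univ := by
      constructor
      · exact Set.subset_univ _
      · intro hu
        exact (hu (Set.mem_univ i)) hi
    have h2 := Set.ncard_lt_ncard hsub (Set.finite_univ)
    rw [Set.ncard_univ, Nat.card_eq_fintype_card, Fintype.card_fin] at h2
    exact Nat.lt_succ_iff.mp h2

lemma memS {L : ℕ} {q q' p : Fin 3 → Fin L} (i j : Fin 3) (h1 : p i = q i)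
    (h2 : p j = q' j) : p ∈ starPlane q ∩ starPlane q' :=
  ⟨mem_sp.mpr ⟨i, h1⟩, mem_sp.mpr ⟨j, h2⟩⟩

lemma seg {L : ℕ} {S : Set (Fin 3 → Fin L)} {p : Fin 3 → Fin L} {m : Fin 3}
    (h : ∀ v, Function.update p m v ∈ S) (a b : Fin L) :
    ((gridGraph L 3).induce S).Reachable ⟨_, h a⟩ ⟨_, h b⟩ := by
  have key : ∀ n : ℕ, ∀ a b : Fin L, (b : ℕ) = a + n →
      ((gridGraph L 3).induce S).Reachable ⟨_, h a⟩ ⟨_, h b⟩ := by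
    intro n
    induction n with
    | zero =>
      intro a b hb
      have : a = b := Fin.ext (by omega)
      subst this
      rfl
    | succ n ih =>
      intro a b hb
      have hlt : (a : ℕ) + n < L := by omega
      set b' : Fin L := ⟨a + n, hlt⟩ with hb'
      have h1 := ih a b' rfl
      have hadj : ((gridGraph L 3).induce S).Adj ⟨_, h b'⟩ ⟨_, h b⟩ := by
        show gridAdj _ _
        refine ⟨m, fun j hj => by simp [Function.update_of_ne hj], Or.inl ?_⟩
        simp [hb', hb]; omega
      exact h1.trans hadj.reachable
  rcases le_or_gt (a : ℕ) (b : ℕ) with hle | hlt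
  · exact key (b - a) a b (by omega)
  · exact (key (a - b) b a (by omega)).symm

lemma step {L : ℕ} {q q' p p' : Fin 3 → Fin L} {m i j : Fin 3}
    (hi : i ≠ m) (hj : j ≠ m) (hpi : p i = q i) (hpj : p j = q' j)
    (hk : ∀ k, k ≠ m → p k = p' k)
    (hp : p ∈ starPlane q ∩ starPlane q') (hp' : p' ∈ starPlane q ∩ starPlane q') :
    ((gridGraph L 3).induce (starPlane q ∩ starPlane q')).Reachable ⟨p, hp⟩ ⟨p', hp'⟩ := by
  have hS : ∀ v, Function.update p m v ∈ starPlane q ∩ starPlane q' := by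
    intro v
    exact memS i j (by rw [Function.update_of_ne hi]; exact hpi)
      (by rw [Function.update_of_ne hj]; exact hpj)
  have v1 : (⟨p, hp⟩ : (starPlane q ∩ starPlane q' : Set _)) = ⟨_, hS (p m)⟩ :=
    Subtype.ext (Function.update_eq_self m p).symm
  have v2 : (⟨p', hp'⟩ : (starPlane q ∩ starPlane q' : Set _)) = ⟨_, hS (p' m)⟩ := by
    refine Subtype.ext ?_
    funext k
    show p' k = Function.update p m (p' m) k
    by_cases hk' : k = m
    · subst hk'; simp
    · rw [Function.update_of_ne hk', hk k hk']
  rw [v1, v2]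
  exact seg hS _ _

lemma toHub {L : ℕ} (q q' p : Fin 3 → Fin L) (hp : p ∈ starPlane q ∩ starPlane q')
    (hhub : ![q 0, q 1, q' 2] ∈ starPlane q ∩ starPlane q') :
    ((gridGraph L 3).induce (starPlane q ∩ starPlane q')).Reachable ⟨p, hp⟩
      ⟨![q 0, q 1, q' 2], hhub⟩ := by
  obtain ⟨a, ha⟩ := mem_sp.mp hp.1
  obtain ⟨b, hb⟩ := mem_sp.mp hp.2
  fin_cases a <;> fin_cases b
  · -- (0,0) : p → ![q 0, q 1, p 2] → hub
    refine (step (m := 1) (i := 0) (j := 0) (p' := ![q 0, q 1, p 2])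
        (by decide) (by decide) ha hb
        (by intro k hk; fin_cases k <;> simp_all)
        hp (memS 0 0 (by simp) (by simpa using ha.symm.trans hb))).trans
      (step (m := 2) (i := 0) (j := 0)
        (by decide) (by decide) (by simp) (by simpa using ha.symm.trans hb)
        (by intro k hk; fin_cases k <;> simp_all)
        _ hhub)
  · -- (0,1) : p → ![p 0, p 1, q' 2] → hub
    refine (step (m := 2) (i := 0) (j := 1) (p' := ![p 0, p 1, q' 2])
        (by decide) (by decide) ha hb
        (by intro k hk; fin_cases k <;> simp_all)
        hp (memS 0 1 (by simpa using ha) (by simpa using hb))).trans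
      (step (m := 1) (i := 0) (j := 2)
        (by decide) (by decide) (by simpa using ha) (by simp)
        (by intro k hk; fin_cases k <;> simp_all)
        _ hhub)
  · -- (0,2) : p → hub directly
    exact step (m := 1) (i := 0) (j := 2)
      (by decide) (by decide) ha hb
      (by intro k hk; fin_cases k <;> simp_all)
      hp hhub
  · -- (1,0) : p → ![p 0, p 1, q' 2] → hub
    refine (step (m := 2) (i := 1) (j := 0) (p' := ![p 0, p 1, q' 2])
        (by decide) (by decide) ha hb
        (by intro k hk; fin_cases k <;> simp_all)
        hp (memS 1 0 (by simpa using ha) (by simpa using hb))).trans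
      (step (m := 0) (i := 1) (j := 2)
        (by decide) (by decide) (by simpa using ha) (by simp)
        (by intro k hk; fin_cases k <;> simp_all)
        _ hhub)
  · -- (1,1) : p → ![q 0, p 1, p 2] → hub
    refine (step (m := 0) (i := 1) (j := 1) (p' := ![q 0, p 1, p 2])
        (by decide) (by decide) ha hb
        (by intro k hk; fin_cases k <;> simp_all)
        hp (memS 1 1 (by simpa using ha) (by simpa using hb))).trans
      (step (m := 2) (i := 0) (j := 1)
        (by decide) (by decide) (by simp) (by simpa using hb)
        (by intro k hk; fin_cases k <;> simp_all)
        _ hhub)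
  · -- (1,2) : p → hub directly
    exact step (m := 0) (i := 1) (j := 2)
      (by decide) (by decide) ha hb
      (by intro k hk; fin_cases k <;> simp_all)
      hp hhub
  · -- (2,0) : p → ![p 0, q 1, p 2] → ![p 0, q 1, q' 2] → hub
    refine ((step (m := 1) (i := 2) (j := 0) (p' := ![p 0, q 1, p 2])
        (by decide) (by decide) ha hb
        (by intro k hk; fin_cases k <;> simp_all)
        hp (memS 2 0 (by simpa using ha) (by simpa using hb))).trans
      (step (m := 2) (i := 1) (j := 0) (p' := ![p 0, q 1, q' 2])
        (by decide) (by decide) (by simp) (by simpa using hb)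
        (by intro k hk; fin_cases k <;> simp_all)
        _ (memS 1 0 (by simp) (by simpa using hb)))).trans
      (step (m := 0) (i := 1) (j := 2)
        (by decide) (by decide) (by simp) (by simp)
        (by intro k hk; fin_cases k <;> simp_all)
        _ hhub)
  · -- (2,1) : p → ![q 0, p 1, p 2] → ![q 0, p 1, q' 2] → hub
    refine ((step (m := 0) (i := 2) (j := 1) (p' := ![q 0, p 1, p 2])
        (by decide) (by decide) ha hb
        (by intro k hk; fin_cases k <;> simp_all)
        hp (memS 2 1 (by simpa using ha) (by simpa using hb))).trans
      (step (m := 2) (i := 0) (j := 1) (p' := ![q 0, p 1, q' 2])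
        (by decide) (by decide) (by simp) (by simpa using hb)
        (by intro k hk; fin_cases k <;> simp_all)
        _ (memS 0 1 (by simp) (by simpa using hb)))).trans
      (step (m := 1) (i := 0) (j := 2)
        (by decide) (by decide) (by simp) (by simp)
        (by intro k hk; fin_cases k <;> simp_all)
        _ hhub)
  · -- (2,2) : p → ![q 0, p 1, p 2] → hub
    refine (step (m := 0) (i := 2) (j := 2) (p' := ![q 0, p 1, p 2])
        (by decide) (by decide) ha hb
        (by intro k hk; fin_cases k <;> simp_all)
        hp (memS 2 2 (by simpa using ha) (by simpa using hb))).trans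
      (step (m := 1) (i := 0) (j := 2)
        (by decide) (by decide) (by simp) (by simpa using hb)
        (by intro k hk; fin_cases k <;> simp_all)
        _ hhub)

theorem stmt11 (L : ℕ) (hL : 1 ≤ L) (q q' : Fin 3 → Fin L) :
    ((gridGraph L 3).induce (starPlane q ∩ starPlane q')).Connected ∧
      (∀ k : Fin 3, ∀ p : Fin 3 → Fin L, p k = q k →
        (∃ l : Fin 3, l ≠ k ∧ p l = q' l) →
        p ∈ starPlane q ∩ starPlane q') := by
  have hhub : ![q 0, q 1, q' 2] ∈ starPlane q ∩ starPlane q' :=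
    memS 0 2 (by simp) (by simp)
  constructor
  · rw [SimpleGraph.connected_iff]
    refine ⟨?_, ⟨⟨_, hhub⟩⟩⟩
    rintro ⟨x, hx⟩ ⟨y, hy⟩
    exact (toHub q q' x hx hhub).trans (toHub q q' y hy hhub).symm
  · rintro k p hpk ⟨l, hlk, hpl⟩
    exact memS k l hpk hpl
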